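/- Let p be a prime with p ≡ 1 (mod 4) and suppose there exist positive integers a, b, Δ' with a ≥ 1, Δ' ≥ 1, b ≡ 3 (mod 4) and 1 < ab < p, such that p = a(b² − Δ'²) − b. Then the Legendre symbol satisfies ((b² − Δ'²)/p) = −1. -/

import Mathlib

open NumberTheorySymbols jacobiSym ZMod

private lemma odd_sq_mod_eight {x : ℤ} (hx : x % 2 = 1) : x ^ 2 % 8 = 1 := by
  obtain ⟨k, rfl⟩ : ∃ k, x = 2 * k + 1 := ⟨x / 2, by omega⟩
  obtain ⟨t, ht⟩ := Int.even_mul_succ_self k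
  have : (2 * k + 1) ^ 2 = 8 * t + 1 := by
    rw [show (8:ℤ) * t = 4 * (t + t) by ring, ← ht]; ring
  omega

/-- Let `p ≡ 1 (mod 4)` be a prime and suppose positive integers `a, b, Δ'` with
`a ≥ 1`, `Δ' ≥ 1`, `b ≡ 3 (mod 4)` and `1 < ab < p` satisfy
`p = a (b² - Δ'²) - b`. Then `((b² - Δ'²)/p) = -1`. -/
theorem stmt_15 (p : ℕ) [Fact p.Prime] (hp1 : p % 4 = 1) (a b Δ' : ℤ)
    (ha : 1 ≤ a) (hb : 0 < b) (hΔ' : 1 ≤ Δ') (hb4 : b % 4 = 3)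
    (hab1 : 1 < a * b) (habp : a * b < (p : ℤ))
    (heq : (p : ℤ) = a * (b ^ 2 - Δ' ^ 2) - b) :
    legendreSym p (b ^ 2 - Δ' ^ 2) = -1 := by
  have hpp := (Fact.out : p.Prime)
  set m : ℤ := b ^ 2 - Δ' ^ 2 with hm
  have hpodd : Odd p := Nat.odd_iff.mpr (by omega)
  have hbab : b ≤ a * b := le_mul_of_one_le_left hb.le ha
  have hbp : b < (p : ℤ) := lt_of_le_of_lt hbab habp
  have hampb : a * m = (p : ℤ) + b := by rw [heq]; ring
  have hppos : (0:ℤ) < p := by exact_mod_cast hpp.pos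
  have hmpos : 0 < m := by nlinarith
  set bn : ℕ := b.toNat with hbn
  have hbcast : (bn : ℤ) = b := Int.toNat_of_nonneg hb.le
  have hbn4 : bn % 4 = 3 := by omega
  have hbnodd : Odd bn := Nat.odd_iff.mpr (by omega)
  have hmdvd : m ∣ (p : ℤ) + b := ⟨a, by linarith⟩
  -- gcd(Δ', bn) = 1
  have hgcd : Int.gcd Δ' (bn : ℤ) = 1 := by
    by_contra hg
    obtain ⟨q, hqp, hqd⟩ := Nat.exists_prime_and_dvd hg
    have hq1 : (q : ℤ) ∣ Δ' := (Int.natCast_dvd_natCast.mpr hqd).trans (Int.gcd_dvd_left Δ' (bn : ℤ))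
    have hq2 : (q : ℤ) ∣ b := by
      have := (Int.natCast_dvd_natCast.mpr hqd).trans (Int.gcd_dvd_right (a := Δ') (b := (bn:ℤ)))
      rwa [hbcast] at this
    have hqm : (q : ℤ) ∣ m := by
      rw [hm]
      exact dvd_sub (dvd_pow hq2 two_ne_zero) (dvd_pow hq1 two_ne_zero)
    have hqpn : (q : ℤ) ∣ (p : ℤ) := by
      have : (q:ℤ) ∣ a * m := hqm.mul_left a
      rw [hampb] at this
      have := dvd_sub this hq2
      simpa using this
    have hqdp : q ∣ p := Int.natCast_dvd_natCast.mp hqpn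
    have : q = p := (Nat.prime_dvd_prime_iff_eq hqp hpp).mp hqdp
    subst this
    have : (q : ℤ) ≤ b := Int.le_of_dvd hb hq2
    omega
  -- the tail computation: J(m | bn) = -1
  have htail : J(m | bn) = -1 := by
    have hdvd : (bn : ℤ) ∣ -Δ' ^ 2 - m := ⟨-b, by rw [hbcast, hm]; ring⟩
    have hmod : m % (bn : ℤ) = (-Δ' ^ 2) % (bn : ℤ) := Int.modEq_iff_dvd.mpr hdvd
    rw [mod_left' hmod, show -Δ' ^ 2 = -1 * Δ' ^ 2 by ring, mul_left, at_neg_one hbnodd,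
      sq_one' hgcd, χ₄_nat_eq_if_mod_four]
    norm_num [show bn % 2 = 1 by omega, hbn4]
  rw [legendreSym.to_jacobiSym]
  rcases Int.emod_two_eq Δ' with hΔe | hΔo
  · -- Δ' even, m ≡ 1 mod 4
    have hm41 : m % 4 = 1 := by
      obtain ⟨q, hq⟩ : ∃ q, b = 4 * q + 3 := ⟨b / 4, by omega⟩
      obtain ⟨t, ht⟩ : ∃ t, Δ' = 2 * t := ⟨Δ' / 2, by omega⟩
      have : m = 4 * (4 * q ^ 2 + 6 * q + 2 - t ^ 2) + 1 := by rw [hm, hq, ht]; ring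
      omega
    set mn : ℕ := m.toNat with hmn
    have hmcast : (mn : ℤ) = m := Int.toNat_of_nonneg hmpos.le
    have hmn4 : mn % 4 = 1 := by omega
    have hmnodd : Odd mn := Nat.odd_iff.mpr (by omega)
    have hdvd1 : (mn : ℤ) ∣ -b - (p : ℤ) := by
      rw [hmcast]; exact ⟨-a, by linarith⟩
    have hmodp : (p : ℤ) % (mn : ℤ) = (-b) % (mn : ℤ) := Int.modEq_iff_dvd.mpr hdvd1
    have hχm : χ₄ (mn : ZMod 4) = 1 := by
      rw [χ₄_nat_eq_if_mod_four]; norm_num [show mn % 2 = 1 by omega, hmn4]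
    calc J(m | p) = J((mn : ℤ) | p) := by rw [hmcast]
      _ = J((p : ℤ) | mn) := quadratic_reciprocity_one_mod_four hmn4 hpodd
      _ = J(-b | mn) := mod_left' hmodp
      _ = J((-1 : ℤ) | mn) * J(b | mn) := by rw [show (-b : ℤ) = -1 * b by ring, mul_left]
      _ = J(b | mn) := by rw [at_neg_one hmnodd, hχm, one_mul]
      _ = J((mn : ℤ) | bn) := by
        rw [← hbcast]; exact quadratic_reciprocity_one_mod_four' hbnodd hmn4
      _ = -1 := by rw [hmcast]; exact htail
  · -- Δ' odd, 8 ∣ m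
    have e1 : b ^ 2 % 8 = 1 := odd_sq_mod_eight (by omega)
    have e2 : Δ' ^ 2 % 8 = 1 := odd_sq_mod_eight hΔo
    have h8 : m % 8 = 0 := by omega
    set mn : ℕ := m.toNat with hmn
    have hmcast : (mn : ℤ) = m := Int.toNat_of_nonneg hmpos.le
    obtain ⟨k, m₀, hm₀odd, hdec⟩ := Nat.exists_eq_two_pow_mul_odd (n := mn) (by omega)
    have hm₀2 : m₀ % 2 = 1 := Nat.odd_iff.mp hm₀odd
    have hmz : m = 2 ^ k * (m₀ : ℤ) := by rw [← hmcast, hdec]; push_cast; ring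
    have hm₀dvd : ((m₀ : ℤ)) ∣ -b - (p : ℤ) := by
      have h1 : (m₀ : ℤ) ∣ m := ⟨2 ^ k, by rw [hmz]; ring⟩
      have h2 := dvd_neg.mpr (h1.trans hmdvd)
      rwa [show -((p : ℤ) + b) = -b - p by ring] at h2
    have hmodp2 : (p : ℤ) % ((m₀ : ℕ) : ℤ) = (-b) % ((m₀ : ℕ) : ℤ) :=
      Int.modEq_iff_dvd.mpr hm₀dvd
    have key2 : J((m₀ : ℤ) | p) = J((m₀ : ℤ) | bn) := by
      rw [quadratic_reciprocity_one_mod_four' hm₀odd hp1, mod_left' hmodp2,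
        show (-b : ℤ) = -1 * b by ring, mul_left, at_neg_one hm₀odd, ← hbcast]
      rcases (show m₀ % 4 = 1 ∨ m₀ % 4 = 3 by omega) with h4 | h4
      · rw [quadratic_reciprocity_one_mod_four' hbnodd h4, χ₄_nat_eq_if_mod_four]
        norm_num [hm₀2, h4]
      · rw [quadratic_reciprocity_three_mod_four hbn4 h4, χ₄_nat_eq_if_mod_four]
        norm_num [hm₀2, h4]
    have h8m : (8 : ℤ) ∣ m := ⟨m / 8, by omega⟩
    have h8pb : (8 : ℤ) ∣ (p : ℤ) + b := h8m.trans hmdvd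
    rw [← hbcast] at h8pb
    have key1 : J(2 | p) = J(2 | bn) := by
      rw [at_two hpodd, at_two hbnodd, χ₈_nat_eq_if_mod_eight, χ₈_nat_eq_if_mod_eight]
      have hcc : bn % 8 = 3 ∧ p % 8 = 5 ∨ bn % 8 = 7 ∧ p % 8 = 1 := by omega
      rcases hcc with ⟨h1, h2⟩ | ⟨h1, h2⟩ <;>
        norm_num [h1, h2, show p % 2 = 1 by omega, show bn % 2 = 1 by omega]
    calc J(m | p) = J(2 | p) ^ k * J((m₀ : ℤ) | p) := by rw [hmz, mul_left, pow_left]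
      _ = J(2 | bn) ^ k * J((m₀ : ℤ) | bn) := by rw [key1, key2]
      _ = J(m | bn) := by rw [hmz, mul_left, pow_left]
      _ = -1 := htail
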